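/- There exists an absolute constant K > 0 such that for all integers n ≥ 3 and all real numbers M ≥ m > 0, the matrix T with t_{i,i} = (n−1)M for i = 1,…,n−1, t_{n,n} = (n−1)m, and t_{i,j} = m for all i ≠ j satisfies max_{i,j} |(T^{-1} − S)_{i,j}| ≤ K/((n−1)² m), where S is the diagonal matrix with S_{i,i} = 1/t_{i,i}. -/

import Mathlib

noncomputable def exampleT (n : ℕ) (m M : ℝ) : Matrix (Fin n) (Fin n) ℝ :=
  Matrix.of fun i j =>
    if i = j then (if (i : ℕ) = n - 1 then ((n : ℝ) - 1) * m else ((n : ℝ) - 1) * M)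
    else m

set_option maxHeartbeats 1000000 in
theorem stmt_16 :
    ∃ K : ℝ, 0 < K ∧ ∀ n : ℕ, 3 ≤ n → ∀ m M : ℝ, 0 < m → m ≤ M →
      ∀ i j : Fin n,
        |((exampleT n m M)⁻¹ - Matrix.diagonal fun k => (exampleT n m M k k)⁻¹) i j|
          ≤ K / (((n : ℝ) - 1) ^ 2 * m) := by
  refine ⟨10, by norm_num, ?_⟩
  intro n hn m M hm hmM i j
  have hn3 : (3:ℝ) ≤ (n:ℝ) := by exact_mod_cast hn
  set d : ℝ := (n:ℝ) - 1 with hd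
  have hd2 : (2:ℝ) ≤ d := by rw [hd]; linarith
  have hM : 0 < M := lt_of_lt_of_le hm hmM
  have hdiag : ∀ k : Fin n, exampleT n m M k k = if (k:ℕ) = n - 1 then d * m else d * M := by
    intro k; simp [exampleT, hd]
  have hoff : ∀ k l : Fin n, k ≠ l → exampleT n m M k l = m := by
    intro k l h; simp [exampleT, h]
  set a : Fin n → ℝ := fun k => exampleT n m M k k - m with haa
  have ha_lb : ∀ k, (d - 1) * m ≤ a k := by
    intro k
    have : a k = exampleT n m M k k - m := rfl
    rw [this, hdiag k]
    split
    · nlinarith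
    · nlinarith
  have ha_pos : ∀ k, 0 < a k := fun k => lt_of_lt_of_le (by nlinarith) (ha_lb k)
  have hTkk : ∀ k, d * m ≤ exampleT n m M k k := by
    intro k
    have : a k = exampleT n m M k k - m := rfl
    nlinarith [ha_lb k]
  have hTkk_pos : ∀ k, 0 < exampleT n m M k k := fun k => lt_of_lt_of_le (by nlinarith) (hTkk k)
  set Ssum : ℝ := ∑ k, (a k)⁻¹ with hS
  have hSpos : 0 ≤ Ssum := Finset.sum_nonneg fun k _ => (inv_nonneg.mpr (ha_pos k).le)
  set c : ℝ := 1 + m * Ssum with hc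
  have hc1 : (1:ℝ) ≤ c := by nlinarith
  have hcpos : (0:ℝ) < c := by linarith
  set X : Matrix (Fin n) (Fin n) ℝ :=
    Matrix.of (fun p q => (if p = q then (a p)⁻¹ else 0) - m / (c * a p * a q)) with hX
  clear_value d a Ssum c X
  have hTX : exampleT n m M * X = 1 := by
    ext p q
    rw [Matrix.mul_apply, Matrix.one_apply]
    have hT : ∀ k, exampleT n m M p k = m + (if p = k then a p else 0) := by
      intro k
      by_cases h : p = k
      · subst h; simp [haa]
      · simp [hoff p k h, h]
    have expand : ∀ k : Fin n, exampleT n m M p k * X k q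
        = (m * (if k = q then (a k)⁻¹ else 0) - (m * m / (c * a q)) * (a k)⁻¹)
          + (if p = k then a p * X k q else 0) := by
      intro k
      rw [hT k, hX]
      by_cases h : p = k
      · simp only [h, if_pos rfl, Matrix.of_apply]
        have := (ha_pos k).ne'
        have := (ha_pos q).ne'
        have := hcpos.ne'
        by_cases hkq : k = q <;> simp [hkq] <;> field_simp <;> ring
      · simp only [if_neg h, Matrix.of_apply, add_zero]
        have := (ha_pos k).ne'
        have := (ha_pos q).ne'
        have := hcpos.ne'
        by_cases hkq : k = q <;> simp [hkq] <;> field_simp <;> ring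
    rw [Finset.sum_congr rfl (fun k _ => expand k)]
    rw [Finset.sum_add_distrib, Finset.sum_sub_distrib]
    simp only [mul_ite, mul_zero, Finset.sum_ite_eq', Finset.sum_ite_eq, Finset.mem_univ, if_true]
    rw [← Finset.mul_sum, ← hS, hX]
    simp only [Matrix.of_apply]
    have haq := (ha_pos q).ne'
    have hap := (ha_pos p).ne'
    have hcne := hcpos.ne'
    by_cases hpq : p = q
    · subst hpq
      simp only [eq_self_iff_true, ↓reduceIte]
      rw [hc]
      field_simp
      ring
    · simp only [if_neg hpq]
      rw [hc]
      field_simp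
      ring
  have hinv : (exampleT n m M)⁻¹ = X := Matrix.inv_eq_right_inv hTX
  clear hTX
  rw [hinv]
  clear hinv
  -- now bound entries
  have hdm : 0 < d * m := by nlinarith
  have hd1m : 0 < (d-1) * m := by nlinarith
  have key_off : ∀ p q : Fin n, m / (c * a p * a q) ≤ 1 / ((d-1)^2 * m) := by
    intro p q
    have h2 : ((d-1)*m) * ((d-1)*m) ≤ a p * a q :=
      mul_le_mul (ha_lb p) (ha_lb q) hd1m.le (ha_pos p).le
    have h3 : a p * a q ≤ a p * a q * c :=
      le_mul_of_one_le_right (by nlinarith [ha_pos p, ha_pos q]) hc1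
    rw [div_le_div_iff₀ (mul_pos (mul_pos hcpos (ha_pos p)) (ha_pos q)) (by nlinarith)]
    nlinarith [ha_pos p, ha_pos q, hcpos]
  have hmain : (1:ℝ) / ((d-1)^2 * m) ≤ 4 / (d^2 * m) := by
    rw [div_le_div_iff₀ (by nlinarith) (by nlinarith)]
    nlinarith
  by_cases hij : i = j
  · subst hij
    simp only [Matrix.sub_apply, hX, Matrix.of_apply, Matrix.diagonal_apply_eq, eq_self_iff_true, if_true]
    have hTii : exampleT n m M i i = a i + m := by simp [haa]
    have hane : a i ≠ 0 := (ha_pos i).ne'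
    have hamne : a i + m ≠ 0 := by nlinarith [ha_pos i]
    have e1 : (a i)⁻¹ - (exampleT n m M i i)⁻¹ = m / (a i * (a i + m)) := by
      rw [hTii]
      field_simp
      ring
    have hrw : (a i)⁻¹ - m / (c * a i * a i) - (exampleT n m M i i)⁻¹
        = m / (a i * (a i + m)) - m / (c * a i * a i) := by
      rw [← e1]; ring
    rw [hrw]
    have b1 : m / (a i * (a i + m)) ≤ 2 / (d^2 * m) := by
      rw [div_le_div_iff₀ (by nlinarith [ha_pos i, hTkk_pos i, hTii]) (by nlinarith)]
      have h1 := ha_lb i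
      have h2 := hTkk i
      rw [hTii] at h2
      have h3 : ((d-1)*m)*(d*m) ≤ a i * (a i + m) :=
        mul_le_mul h1 h2 hdm.le (ha_pos i).le
      have h4 : d^2*m*m ≤ 2*(((d-1)*m)*(d*m)) := by
        nlinarith [mul_nonneg (mul_nonneg (by linarith : (0:ℝ) ≤ d)
          (by linarith : (0:ℝ) ≤ d - 2)) (mul_pos hm hm).le]
      nlinarith [h3, h4]
    have b2 : m / (c * a i * a i) ≤ 4 / (d^2 * m) :=
      le_trans (key_off i i) hmain
    have pos1 : 0 ≤ m / (a i * (a i + m)) :=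
      div_nonneg hm.le (mul_pos (ha_pos i) (by nlinarith [ha_pos i] : (0:ℝ) < a i + m)).le
    have pos2 : 0 ≤ m / (c * a i * a i) :=
      div_nonneg hm.le (mul_pos (mul_pos hcpos (ha_pos i)) (ha_pos i)).le
    rw [abs_le]
    constructor
    · have : -(10 / (d^2*m)) ≤ -(4 / (d^2*m)) := by
        rw [neg_le_neg_iff]
        rw [div_le_div_iff₀ (by nlinarith) (by nlinarith)]; nlinarith
      linarith
    · have : (2:ℝ) / (d^2*m) ≤ 10 / (d^2*m) := by
        rw [div_le_div_iff₀ (by nlinarith) (by nlinarith)]; nlinarith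
      linarith
  · simp only [Matrix.sub_apply, hX, Matrix.of_apply, if_neg hij,
      Matrix.diagonal_apply_ne _ hij, sub_zero, zero_sub, abs_neg]
    rw [abs_of_nonneg (le_of_lt (div_pos hm (mul_pos (mul_pos hcpos (ha_pos i)) (ha_pos j))))]
    calc m / (c * a i * a j) ≤ 1 / ((d-1)^2 * m) := key_off i j
      _ ≤ 4 / (d^2*m) := hmain
      _ ≤ 10 / (d^2*m) := by
          rw [div_le_div_iff₀ (by nlinarith) (by nlinarith)]; nlinarith
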